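/- Let q ∈ ℝ^k be a unit vector, μ ∈ [0,1], and let v₁, v₂ ∈ 𝒦_μ(q) be two nonzero vectors in the cone 𝒦_μ(q) = { x : xᵀq/‖x‖₂ ≥ 1 − μ }. Then there exist perturbations e₁, e₂ with ‖e_i‖₂ ≤ √(2μ)‖v_i‖₂ such that v₁ + e₁ and v₂ + e₂ are collinear. Consequently, the smallest singular value of the k×2 matrix [v₁ v₂] is at most √(2μ)·max(‖v₁‖₂, ‖v₂‖₂)·√2. -/
import Mathlib


open Matrix BigOperators

noncomputable def vecNorm {m : ℕ} (v : Fin m → ℝ) : ℝ :=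
  Real.sqrt (∑ i, v i ^ 2)

noncomputable def frobNorm {m n : ℕ} (A : Matrix (Fin m) (Fin n) ℝ) : ℝ :=
  Real.sqrt (∑ i, ∑ j, A i j ^ 2)

/-- spectral (operator) norm w.r.t. Euclidean norms -/
noncomputable def specNorm {m n : ℕ} (A : Matrix (Fin m) (Fin n) ℝ) : ℝ :=
  sSup {r | ∃ x : Fin n → ℝ, vecNorm x ≤ 1 ∧ r = vecNorm (A.mulVec x)}

/-- smallest singular value (for matrices with at least as many rows as columns) -/
noncomputable def sMin {m n : ℕ} (A : Matrix (Fin m) (Fin n) ℝ) : ℝ :=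
  sInf {r | ∃ x : Fin n → ℝ, vecNorm x = 1 ∧ r = vecNorm (A.mulVec x)}

lemma vecNorm_eq_norm {m : ℕ} (v : Fin m → ℝ) :
    vecNorm v = ‖(WithLp.equiv 2 (Fin m → ℝ)).symm v‖ := by
  rw [EuclideanSpace.norm_eq]
  simp [vecNorm, Real.norm_eq_abs, sq_abs]

lemma vecNorm_nonneg {m : ℕ} (v : Fin m → ℝ) : 0 ≤ vecNorm v :=
  Real.sqrt_nonneg _

lemma vecNorm_add_le {m : ℕ} (v w : Fin m → ℝ) :
    vecNorm (v + w) ≤ vecNorm v + vecNorm w := by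
  simp only [vecNorm_eq_norm]
  exact norm_add_le ((WithLp.equiv 2 (Fin m → ℝ)).symm v) ((WithLp.equiv 2 (Fin m → ℝ)).symm w)

lemma vecNorm_smul {m : ℕ} (c : ℝ) (v : Fin m → ℝ) :
    vecNorm (c • v) = |c| * vecNorm v := by
  simp only [vecNorm_eq_norm]
  have : (WithLp.equiv 2 (Fin m → ℝ)).symm (c • v)
      = c • (WithLp.equiv 2 (Fin m → ℝ)).symm v := rfl
  rw [this, norm_smul, Real.norm_eq_abs]

lemma key_pert {k : ℕ} (q v : Fin k → ℝ) (μ : ℝ)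
    (hq : vecNorm q = 1) (hμ0 : 0 ≤ μ) (hμ1 : μ ≤ 1) (hv : v ≠ 0)
    (hcone : 1 - μ ≤ (∑ i, v i * q i) / vecNorm v) :
    vecNorm ((∑ i, v i * q i) • q - v) ≤ Real.sqrt (2 * μ) * vecNorm v := by
  set a : ℝ := ∑ i, v i * q i with ha
  have hq2 : (∑ i, q i ^ 2) = 1 := by
    have h0 : (0:ℝ) ≤ ∑ i, q i ^ 2 := Finset.sum_nonneg (fun i _ => sq_nonneg (q i))
    have := hq
    rw [vecNorm] at this
    nlinarith [Real.sq_sqrt h0]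
  have hS : 0 < ∑ i, v i ^ 2 := by
    obtain ⟨i, hi⟩ := Function.ne_iff.mp hv
    exact Finset.sum_pos' (fun j _ => sq_nonneg _) ⟨i, Finset.mem_univ i, by nlinarith [sq_abs (v i), pow_pos (abs_pos.mpr hi) 2]⟩
  have hN : 0 < vecNorm v := Real.sqrt_pos.mpr hS
  have hN2 : (vecNorm v) ^ 2 = ∑ i, v i ^ 2 := Real.sq_sqrt hS.le
  have haN : (1 - μ) * vecNorm v ≤ a := (le_div_iff₀ hN).mp hcone
  have hsum : (∑ i, ((a • q - v) i) ^ 2) = (∑ i, v i ^ 2) - a ^ 2 := by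
    have h1 : ∀ i, ((a • q - v) i) ^ 2 = a ^ 2 * q i ^ 2 - 2 * a * (v i * q i) + v i ^ 2 := by
      intro i; simp only [Pi.sub_apply, Pi.smul_apply, smul_eq_mul]; ring
    rw [Finset.sum_congr rfl (fun i _ => h1 i)]
    rw [Finset.sum_add_distrib, Finset.sum_sub_distrib, ← Finset.mul_sum, ← Finset.mul_sum,
      hq2, ← ha]
    ring
  have hbound : (∑ i, ((a • q - v) i) ^ 2) ≤ 2 * μ * ∑ i, v i ^ 2 := by
    rw [hsum]
    have h2 : ((1 - μ) * vecNorm v) ^ 2 ≤ a ^ 2 := by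
      have := mul_nonneg (sub_nonneg.mpr hμ1) hN.le
      nlinarith [haN]
    nlinarith [h2, hN2, mul_nonneg (sq_nonneg μ) hS.le]
  calc vecNorm (a • q - v) = Real.sqrt (∑ i, ((a • q - v) i) ^ 2) := rfl
    _ ≤ Real.sqrt (2 * μ * ∑ i, v i ^ 2) := Real.sqrt_le_sqrt hbound
    _ = Real.sqrt (2 * μ) * vecNorm v := by
        rw [Real.sqrt_mul (by positivity), vecNorm]


set_option maxHeartbeats 1000000

/-- two nonzero vectors in the same cone K_μ(q) can be made
collinear by perturbations of norm at most √(2μ) times their norms; hence the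
smallest singular value of the k×2 matrix [v₁ v₂] is at most
√2·√(2μ)·max(‖v₁‖,‖v₂‖). -/
theorem cone_two_vectors_nearly_collinear
    (k : ℕ) (q v₁ v₂ : Fin k → ℝ) (μ : ℝ)
    (hq : vecNorm q = 1) (hμ0 : 0 ≤ μ) (hμ1 : μ ≤ 1)
    (hv₁0 : v₁ ≠ 0) (hv₂0 : v₂ ≠ 0)
    (hcone₁ : 1 - μ ≤ (∑ i, v₁ i * q i) / vecNorm v₁)
    (hcone₂ : 1 - μ ≤ (∑ i, v₂ i * q i) / vecNorm v₂) :
    (∃ e₁ e₂ : Fin k → ℝ,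
        vecNorm e₁ ≤ Real.sqrt (2 * μ) * vecNorm v₁ ∧
        vecNorm e₂ ≤ Real.sqrt (2 * μ) * vecNorm v₂ ∧
        ∃ c : ℝ, v₁ + e₁ = c • (v₂ + e₂) ∨ v₂ + e₂ = c • (v₁ + e₁))
    ∧ sMin (Matrix.of fun (i : Fin k) (j : Fin 2) => if j = 0 then v₁ i else v₂ i)
        ≤ Real.sqrt 2 * Real.sqrt (2 * μ) * max (vecNorm v₁) (vecNorm v₂) := by
  set a₁ : ℝ := ∑ i, v₁ i * q i with ha₁
  set a₂ : ℝ := ∑ i, v₂ i * q i with ha₂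
  set e₁ : Fin k → ℝ := a₁ • q - v₁ with he₁def
  set e₂ : Fin k → ℝ := a₂ • q - v₂ with he₂def
  have he₁ : vecNorm e₁ ≤ Real.sqrt (2 * μ) * vecNorm v₁ :=
    key_pert q v₁ μ hq hμ0 hμ1 hv₁0 hcone₁
  have he₂ : vecNorm e₂ ≤ Real.sqrt (2 * μ) * vecNorm v₂ :=
    key_pert q v₂ μ hq hμ0 hμ1 hv₂0 hcone₂
  have hve₁ : v₁ + e₁ = a₁ • q := by rw [he₁def]; abel
  have hve₂ : v₂ + e₂ = a₂ • q := by rw [he₂def]; abel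
  -- positivity of norms
  have hSpos : ∀ v : Fin k → ℝ, v ≠ 0 → 0 < ∑ i, v i ^ 2 := by
    intro v hv
    obtain ⟨i, hi⟩ := Function.ne_iff.mp hv
    exact Finset.sum_pos' (fun j _ => sq_nonneg _)
      ⟨i, Finset.mem_univ i, by nlinarith [sq_abs (v i), pow_pos (abs_pos.mpr hi) 2]⟩
  have hN₁ : 0 < vecNorm v₁ := Real.sqrt_pos.mpr (hSpos v₁ hv₁0)
  have hN₂ : 0 < vecNorm v₂ := Real.sqrt_pos.mpr (hSpos v₂ hv₂0)
  have ha₁N : (1 - μ) * vecNorm v₁ ≤ a₁ := (le_div_iff₀ hN₁).mp hcone₁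
  have ha₂N : (1 - μ) * vecNorm v₂ ≤ a₂ := (le_div_iff₀ hN₂).mp hcone₂
  constructor
  · refine ⟨e₁, e₂, he₁, he₂, ?_⟩
    by_cases h : a₂ = 0
    · exact ⟨0, Or.inr (by rw [hve₂, h, zero_smul, zero_smul])⟩
    · refine ⟨a₁ / a₂, Or.inl ?_⟩
      rw [hve₁, hve₂, smul_smul, div_mul_cancel₀ _ h]
  · -- singular value bound
    set A := Matrix.of fun (i : Fin k) (j : Fin 2) => if j = 0 then v₁ i else v₂ i with hA
    have hbdd : BddBelow {r | ∃ x : Fin 2 → ℝ, vecNorm x = 1 ∧ r = vecNorm (A.mulVec x)} := by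
      refine ⟨0, ?_⟩
      rintro r ⟨x, _, rfl⟩
      exact vecNorm_nonneg _
    set M := max (vecNorm v₁) (vecNorm v₂) with hM
    have hM0 : 0 ≤ M := le_trans hN₁.le (le_max_left _ _)
    have ht0 : 0 ≤ Real.sqrt (2 * μ) := Real.sqrt_nonneg _
    by_cases hs : a₁ = 0 ∧ a₂ = 0
    · -- degenerate case: μ = 1
      have hμ : μ = 1 := by
        have := ha₁N
        rw [hs.1] at this
        nlinarith
      set x : Fin 2 → ℝ := fun j => if j = 0 then 1 else 0 with hx
      have hxn : vecNorm x = 1 := by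
        rw [vecNorm, Fin.sum_univ_two]
        norm_num [hx]
      have hAx : A.mulVec x = v₁ := by
        funext i
        simp [Matrix.mulVec, dotProduct, Fin.sum_univ_two, hA, hx]
      refine le_trans (csInf_le hbdd ⟨x, hxn, rfl⟩) ?_
      rw [hAx, hμ]
      have h2 : Real.sqrt 2 * Real.sqrt (2 * 1) = 2 := by
        rw [show (2:ℝ)*1 = 2 by ring, ← Real.sqrt_mul_self (by norm_num : (0:ℝ) ≤ 2)]
        norm_num [Real.mul_self_sqrt]
      rw [h2]
      calc vecNorm v₁ ≤ M := le_max_left _ _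
        _ ≤ 2 * M := by linarith [hM0, hM0]
    · have hss : 0 < a₁ ^ 2 + a₂ ^ 2 := by
        rcases not_and_or.mp hs with h | h
        · positivity
        · positivity
      set s : ℝ := Real.sqrt (a₁ ^ 2 + a₂ ^ 2) with hsdef
      have hspos : 0 < s := Real.sqrt_pos.mpr hss
      have hs2 : s ^ 2 = a₁ ^ 2 + a₂ ^ 2 := Real.sq_sqrt hss.le
      have hs0 : s ≠ 0 := hspos.ne'
      set x : Fin 2 → ℝ := fun j => if j = 0 then a₂ / s else -a₁ / s with hx
      have hx0 : x 0 = a₂ / s := rfl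
      have hx1 : x 1 = -a₁ / s := rfl
      have hxn : vecNorm x = 1 := by
        rw [vecNorm, Fin.sum_univ_two, hx0, hx1]
        have h : (a₂ / s) ^ 2 + (-a₁ / s) ^ 2 = 1 := by
          field_simp
          linarith [hs2]
        rw [h, Real.sqrt_one]
      have hAx : A.mulVec x = (-(a₂ / s)) • e₁ + (a₁ / s) • e₂ := by
        funext i
        simp only [Matrix.mulVec, dotProduct, Fin.sum_univ_two]
        have h0 : A i 0 = v₁ i := rfl
        have h1 : A i 1 = v₂ i := rfl
        rw [h0, h1, hx0, hx1]
        simp only [Pi.add_apply, Pi.smul_apply, Pi.sub_apply, he₁def, he₂def, smul_eq_mul]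
        ring
      refine le_trans (csInf_le hbdd ⟨x, hxn, rfl⟩) ?_
      rw [hAx]
      have habs : |a₁| + |a₂| ≤ Real.sqrt 2 * s := by
        have h1 : (|a₁| + |a₂|) ^ 2 ≤ (Real.sqrt 2 * s) ^ 2 := by
          rw [mul_pow, Real.sq_sqrt (by norm_num : (0:ℝ) ≤ 2), hs2]
          nlinarith [sq_nonneg (|a₁| - |a₂|), sq_abs a₁, sq_abs a₂]
        have h2 : 0 ≤ Real.sqrt 2 * s := by positivity
        calc |a₁| + |a₂| = Real.sqrt ((|a₁| + |a₂|) ^ 2) := (Real.sqrt_sq (by positivity)).symm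
          _ ≤ Real.sqrt ((Real.sqrt 2 * s) ^ 2) := Real.sqrt_le_sqrt h1
          _ = Real.sqrt 2 * s := Real.sqrt_sq h2
      calc vecNorm ((-(a₂ / s)) • e₁ + (a₁ / s) • e₂)
          ≤ vecNorm ((-(a₂ / s)) • e₁) + vecNorm ((a₁ / s) • e₂) := vecNorm_add_le _ _
        _ = |a₂| / s * vecNorm e₁ + |a₁| / s * vecNorm e₂ := by
            rw [vecNorm_smul, vecNorm_smul, abs_neg, abs_div, abs_div,
              abs_of_pos hspos]
        _ ≤ |a₂| / s * (Real.sqrt (2 * μ) * M) + |a₁| / s * (Real.sqrt (2 * μ) * M) := by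
            have b₁ : vecNorm e₁ ≤ Real.sqrt (2 * μ) * M :=
              he₁.trans (by gcongr; exact le_max_left _ _)
            have b₂ : vecNorm e₂ ≤ Real.sqrt (2 * μ) * M :=
              he₂.trans (by gcongr; exact le_max_right _ _)
            gcongr <;> positivity
        _ = (|a₁| + |a₂|) / s * (Real.sqrt (2 * μ) * M) := by ring
        _ ≤ Real.sqrt 2 * (Real.sqrt (2 * μ) * M) := by
            have : (|a₁| + |a₂|) / s ≤ Real.sqrt 2 := by
              rw [div_le_iff₀ hspos]; exact habs
            exact mul_le_mul_of_nonneg_right this (by positivity)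
        _ = Real.sqrt 2 * Real.sqrt (2 * μ) * M := by ring
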